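/- Let R > r ≥ 2 and m ≥ 3 be integers and let B = B(r,R,m) ⊆ ℝ^r. Let S ⊆ B be a pierced simplex, and for each l ∈ {1,…,r} let t_l > 0 be such that t_l·e_l ∈ conv(S). If i ∈ {1,…,r} is such that t_i = min{t_1,…,t_r}, then every point x ∈ C_i \ L_r lies strictly above S, i.e., ∑_{l=1}^r x_l/t_l > 1; in particular, the point t_i·e_i is an element of S. -/

import Mathlib

/-- The point `b_{i,j,k}` of the projected construction `B(r,R,m)` (1-based indices). -/
noncomputable def ptB (r R m i j k : ℕ) : Fin r → ℝ := fun l =>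
  if (l : ℕ) + 1 = i then
    (∑ l' ∈ Finset.Icc (j + 1) R, (m : ℝ) ^ (2 * R - 2 * l' + 3))
      + ((R - j : ℕ) : ℝ) * (m : ℝ) + (k : ℝ)
  else if j + 1 ≤ (l : ℕ) + 1 then
    -((m : ℝ) ^ (2 * R - 2 * ((l : ℕ) + 1) + 3))
  else 0

/-- The point set `B(r,R,m) ⊆ ℝ^r`. -/
def Bpts (r R m : ℕ) : Set (Fin r → ℝ) :=
  {x | ∃ i j k : ℕ, 1 ≤ i ∧ i ≤ j ∧ j ≤ r ∧ 1 ≤ k ∧ k ≤ m ∧ x = ptB r R m i j k}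

/-- The set `C_i` of points of `B(r,R,m)` of color `i`. -/
def colorSetB (r R m i : ℕ) : Set (Fin r → ℝ) :=
  {x | ∃ j k : ℕ, 1 ≤ i ∧ i ≤ j ∧ j ≤ r ∧ 1 ≤ k ∧ k ≤ m ∧ x = ptB r R m i j k}

/-- The set `L_j` of points of `B(r,R,m)` of layer `j`. -/
def layerSetB (r R m j : ℕ) : Set (Fin r → ℝ) :=
  {x | ∃ i k : ℕ, 1 ≤ i ∧ i ≤ j ∧ j ≤ r ∧ 1 ≤ k ∧ k ≤ m ∧ x = ptB r R m i j k}

/-- A set `S ⊆ ℝ^r` is pierced if its convex hull meets the line `ℝ·1_r`. -/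
def Pierced {r : ℕ} (S : Set (Fin r → ℝ)) : Prop :=
  ∃ c : ℝ, (fun _ => c : Fin r → ℝ) ∈ convexHull ℝ S

/-- The `i`-th standard basis vector of `ℝ^r` (1-based index). -/
def stdVec (r i : ℕ) : Fin r → ℝ := fun l => if (l : ℕ) + 1 = i then 1 else 0

lemma Icc_succ_eq_Ioc (a b : ℕ) : Finset.Icc (a + 1) b = Finset.Ioc a b := by
  ext x; simp only [Finset.mem_Icc, Finset.mem_Ioc]; omega

lemma sum_ptB (r R m i j k : ℕ) (hi1 : 1 ≤ i) (hij : i ≤ j) (hjr : j ≤ r) (hrR : r ≤ R) :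
    ∑ l : Fin r, ptB r R m i j k l
      = (∑ l' ∈ Finset.Icc (r + 1) R, (m : ℝ) ^ (2 * R - 2 * l' + 3))
        + ((R - j : ℕ) : ℝ) * (m : ℝ) + (k : ℝ) := by
  set P : ℝ := (∑ l' ∈ Finset.Icc (j + 1) R, (m : ℝ) ^ (2 * R - 2 * l' + 3))
    + ((R - j : ℕ) : ℝ) * (m : ℝ) + (k : ℝ) with hP
  set G : ℕ → ℝ := fun n => if j + 1 ≤ n then -((m : ℝ) ^ (2 * R - 2 * n + 3)) else 0 with hG
  have h0 : ∑ l : Fin r, ptB r R m i j k l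
      = ∑ n ∈ Finset.range r, (fun n : ℕ => (if n + 1 = i then P
            else if j + 1 ≤ n + 1 then -((m : ℝ) ^ (2 * R - 2 * (n + 1) + 3)) else 0)) n :=
    Fin.sum_univ_eq_sum_range (fun n : ℕ => (if n + 1 = i then P
            else if j + 1 ≤ n + 1 then -((m : ℝ) ^ (2 * R - 2 * (n + 1) + 3)) else 0)) r
  rw [h0]
  have h1 : ∀ n ∈ Finset.range r, (if n + 1 = i then P
        else if j + 1 ≤ n + 1 then -((m : ℝ) ^ (2 * R - 2 * (n + 1) + 3)) else 0)
      = (if n + 1 = i then P else 0) + G (n + 1) := by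
    intro n _
    by_cases h : n + 1 = i
    · simp [h, hG, if_neg (show ¬ (j + 1 ≤ i) by omega)]
      intro hh; omega
    · simp [h, hG]
  rw [Finset.sum_congr rfl h1, Finset.sum_add_distrib]
  have h2 : (∑ n ∈ Finset.range r, if n + 1 = i then P else 0) = P := by
    rw [Finset.sum_congr rfl (fun n _ => if_congr (show (n + 1 = i) ↔ (n = i - 1) by omega) rfl rfl)]
    rw [Finset.sum_ite_eq' (Finset.range r) (i - 1) (fun _ => P)]
    rw [if_pos (by simp only [Finset.mem_range]; omega)]
  have h3 : (∑ n ∈ Finset.range r, G (n + 1))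
      = -∑ l' ∈ Finset.Icc (j + 1) r, (m : ℝ) ^ (2 * R - 2 * l' + 3) := by
    have e1 : ∑ l' ∈ Finset.Ico 1 (r + 1), G l' = ∑ n ∈ Finset.range r, G (n + 1) := by
      rw [Finset.sum_Ico_eq_sum_range]
      exact Finset.sum_congr rfl fun n _ => by rw [add_comm]
    rw [← e1, Finset.Ico_add_one_right_eq_Icc, hG, ← Finset.sum_filter,
      show Finset.filter (fun l' => j + 1 ≤ l') (Finset.Icc 1 r) = Finset.Icc (j + 1) r by
        ext a; simp only [Finset.mem_filter, Finset.mem_Icc]; omega,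
      Finset.sum_neg_distrib]
  rw [h2, h3, hP]
  have h4 := Finset.sum_Ioc_consecutive (fun l' => (m : ℝ) ^ (2 * R - 2 * l' + 3)) hjr hrR
  rw [Icc_succ_eq_Ioc, Icc_succ_eq_Ioc, Icc_succ_eq_Ioc]
  linarith [h4]

lemma stdVec_sum_eval (r : ℕ) (a : Fin r → ℝ) (l : Fin r) :
    ∑ l' : Fin r, a l' * stdVec r ((l' : ℕ) + 1) l = a l := by
  have h : ∀ l' : Fin r, a l' * stdVec r ((l' : ℕ) + 1) l = if l' = l then a l' else 0 := by
    intro l'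
    by_cases h : l' = l
    · subst h; simp [stdVec]
    · have h2 : ¬ ((l : ℕ) + 1 = (l' : ℕ) + 1) := by
        intro hh; exact h (Fin.ext (by omega))
      simp [stdVec, h2, h]
      exact fun hh => absurd (Fin.ext hh).symm h
  rw [Finset.sum_congr rfl (fun l' _ => h l'), Finset.sum_ite_eq' Finset.univ l a]
  simp

lemma finrank_span_image_le {α β : Type*} [AddCommGroup β] [Module ℝ β]
    (S : Set α) (hSfin : S.Finite) (u : α → β) (n : ℕ) (hcard : S.ncard = n) :
    Module.finrank ℝ ↥(Submodule.span ℝ (u '' S)) ≤ n := by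
  classical
  have hVeq : Submodule.span ℝ (u '' S) = Submodule.span ℝ ↑(hSfin.toFinset.image u) := by
    congr 1
    rw [Finset.coe_image, Set.Finite.coe_toFinset]
  rw [hVeq]
  have h0 := finrank_span_finset_le_card (R := ℝ) (hSfin.toFinset.image u)
  unfold Set.finrank at h0
  refine le_trans h0 (le_trans Finset.card_image_le ?_)
  rw [← Set.ncard_eq_toFinset_card S hSfin, hcard]

set_option maxHeartbeats 1000000 in
/-- for `B(r,R,m)`, if `t_i` is minimal then all points of `C_i \ L_r`
lie strictly above `S`; in particular `t_i • e_i ∈ S`. -/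
theorem B_min_axis_above
    (r R m : ℕ) (hr : 2 ≤ r) (hrR : r < R) (hm : 3 ≤ m)
    (S : Set (Fin r → ℝ)) (hSB : S ⊆ Bpts r R m) (hS : Pierced S) (hcard : S.ncard = r)
    (t : ℕ → ℝ) (ht : ∀ l : ℕ, 1 ≤ l → l ≤ r →
      0 < t l ∧ t l • stdVec r l ∈ convexHull ℝ S)
    (i : ℕ) (hi1 : 1 ≤ i) (hir : i ≤ r)
    (hmin : ∀ l : ℕ, 1 ≤ l → l ≤ r → t i ≤ t l) :
    (∀ x ∈ colorSetB r R m i \ layerSetB r R m r,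
      1 < ∑ l : Fin r, x l / t ((l : ℕ) + 1)) ∧
    t i • stdVec r i ∈ S := by
  classical
  have hm' : (3 : ℝ) ≤ (m : ℝ) := by exact_mod_cast hm
  have hti : 0 < t i := (ht i hi1 hir).1
  set M : ℝ := (∑ l' ∈ Finset.Icc (r + 1) R, (m : ℝ) ^ (2 * R - 2 * l' + 3))
    + ((R - r : ℕ) : ℝ) * (m : ℝ) + (m : ℝ) with hM
  have hM0 : 0 ≤ M := by
    have h1 : 0 ≤ ∑ l' ∈ Finset.Icc (r + 1) R, (m : ℝ) ^ (2 * R - 2 * l' + 3) :=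
      Finset.sum_nonneg fun _ _ => by positivity
    have h2 : (0:ℝ) ≤ ((R - r : ℕ) : ℝ) * (m : ℝ) := by positivity
    linarith
  -- the r-th coordinate of every point of B is at most M
  set lr : Fin r := ⟨r - 1, by omega⟩ with hlr
  have hlr1 : (lr : ℕ) + 1 = r := by simp [hlr]; omega
  have hcoordB : ∀ x ∈ Bpts r R m, x lr ≤ M := by
    rintro x ⟨i', j, k, hi'1, hi'j, hjr, hk1, hkm, rfl⟩
    rw [ptB]
    split_ifs with h1 h2
    · -- color r, so layer j = r
      have hji : j = r := by omega
      subst hji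
      rw [hM]
      have : (k : ℝ) ≤ (m : ℝ) := by exact_mod_cast hkm
      linarith
    · have : (0:ℝ) ≤ (m : ℝ) ^ (2 * R - 2 * ((lr : ℕ) + 1) + 3) := by positivity
      linarith
    · exact hM0
  have hconvM : ∀ y ∈ convexHull ℝ S, y lr ≤ M := by
    intro y hy
    have hsub : convexHull ℝ S ⊆ {x : Fin r → ℝ | x lr ≤ M} := by
      apply convexHull_min
      · intro s hs; exact hcoordB s (hSB hs)
      · exact convex_halfSpace_le (⟨fun _ _ => rfl, fun _ _ => rfl⟩ : IsLinearMap ℝ fun x : Fin r → ℝ => x lr) M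
    exact hsub hy
  have htr : t r ≤ M := by
    have h1 := hconvM _ (ht r (by omega) le_rfl).2
    have h2 : (t r • stdVec r r) lr = t r := by
      simp [stdVec, hlr1]
    rwa [h2] at h1
  have htiM : t i ≤ M := le_trans (hmin r (by omega) le_rfl) htr
  -- PART 1
  have part1 : ∀ x ∈ colorSetB r R m i \ layerSetB r R m r,
      1 < ∑ l : Fin r, x l / t ((l : ℕ) + 1) := by
    rintro x ⟨⟨j, k, _, hij, hjr, hk1, hkm, rfl⟩, hnot⟩
    have hjlt : j < r := by
      rcases Nat.lt_or_ge j r with h | h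
      · exact h
      · exfalso
        have hjr' : j = r := le_antisymm hjr h
        exact hnot ⟨i, k, hi1, by omega, le_rfl, hk1, hkm, by rw [hjr']⟩
    have hterm : ∀ l : Fin r, ptB r R m i j k l / t i ≤ ptB r R m i j k l / t ((l : ℕ) + 1) := by
      intro l
      by_cases hc : (l : ℕ) + 1 = i
      · rw [hc]
      · have hle : t i ≤ t ((l : ℕ) + 1) := hmin _ (by omega) l.isLt
        have hnp : ptB r R m i j k l ≤ 0 := by
          simp only [ptB]
          rw [if_neg hc]
          split_ifs
          · have : (0:ℝ) ≤ (m : ℝ) ^ (2 * R - 2 * ((l : ℕ) + 1) + 3) := by positivity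
            linarith
          · exact le_refl 0
        rw [div_eq_mul_inv, div_eq_mul_inv]
        exact mul_le_mul_of_nonpos_left (inv_anti₀ hti hle) hnp
    have hsum := sum_ptB r R m i j k hi1 hij hjr (le_of_lt hrR)
    have hnum : t i < (∑ l' ∈ Finset.Icc (r + 1) R, (m : ℝ) ^ (2 * R - 2 * l' + 3))
        + ((R - j : ℕ) : ℝ) * (m : ℝ) + (k : ℝ) := by
      have hRj : (R - r : ℕ) + 1 ≤ (R - j : ℕ) := by omega
      have hRj' : ((R - r : ℕ) : ℝ) + 1 ≤ ((R - j : ℕ) : ℝ) := by exact_mod_cast hRj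
      have hk' : (1:ℝ) ≤ (k : ℝ) := by exact_mod_cast hk1
      have : M < (∑ l' ∈ Finset.Icc (r + 1) R, (m : ℝ) ^ (2 * R - 2 * l' + 3))
          + ((R - j : ℕ) : ℝ) * (m : ℝ) + (k : ℝ) := by
        rw [hM]
        nlinarith [hm']
      linarith
    refine lt_of_lt_of_le ((one_lt_div hti).2 hnum) ?_
    calc ((∑ l' ∈ Finset.Icc (r + 1) R, (m : ℝ) ^ (2 * R - 2 * l' + 3))
            + ((R - j : ℕ) : ℝ) * (m : ℝ) + (k : ℝ)) / t i
        = (∑ l : Fin r, ptB r R m i j k l) / t i := by rw [hsum]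
      _ = ∑ l : Fin r, ptB r R m i j k l / t i := by rw [Finset.sum_div]
      _ ≤ ∑ l : Fin r, ptB r R m i j k l / t ((l : ℕ) + 1) :=
          Finset.sum_le_sum fun l _ => hterm l
  -- f s = 1 for all s in S
  have hSfin : S.Finite := by
    by_contra h
    have h0 : S.ncard = 0 := Set.Infinite.ncard h
    omega
  set u : (Fin r → ℝ) → (Fin r → ℝ) × ℝ := fun x => (x, 1) with hu
  set V : Submodule ℝ ((Fin r → ℝ) × ℝ) := Submodule.span ℝ (u '' S) with hV
  have hconv : ∀ x ∈ convexHull ℝ S, u x ∈ V := by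
    intro x hx
    have hsub : convexHull ℝ S ⊆ {x : Fin r → ℝ | u x ∈ V} := by
      apply convexHull_min
      · intro s hs
        exact Submodule.subset_span ⟨s, hs, rfl⟩
      · intro a ha b hb p q hp hq hpq
        have h1 : u a ∈ V := ha
        have h2 : u b ∈ V := hb
        have h3 : p • u a + q • u b ∈ V := V.add_mem (V.smul_mem _ h1) (V.smul_mem _ h2)
        have heq : p • u a + q • u b = u (p • a + q • b) := by
          rw [hu]
          simp only [Prod.smul_mk, Prod.mk_add_mk, smul_eq_mul, mul_one]
          rw [hpq]
        rwa [heq] at h3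
    exact hsub hx
  set v : Fin r → (Fin r → ℝ) × ℝ := fun l => (t ((l : ℕ) + 1) • stdVec r ((l : ℕ) + 1), 1)
    with hv
  have hvV : ∀ l : Fin r, v l ∈ V := by
    intro l
    exact hconv _ (ht ((l : ℕ) + 1) (by omega) l.isLt).2
  have hli : LinearIndependent ℝ v := by
    rw [Fintype.linearIndependent_iff]
    intro g hg l
    have h1 := congrArg Prod.fst hg
    rw [Prod.fst_sum] at h1
    have h2 := congrFun h1 l
    simp only [hv, Prod.smul_mk, Finset.sum_apply, Pi.smul_apply, smul_eq_mul,
      Prod.fst_zero, Pi.zero_apply] at h2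
    have h3 : ∑ l' : Fin r, (g l' * t ((l' : ℕ) + 1)) * stdVec r ((l' : ℕ) + 1) l = 0 := by
      rw [← h2]
      exact Finset.sum_congr rfl fun l' _ => by ring
    rw [stdVec_sum_eval r (fun l' => g l' * t ((l' : ℕ) + 1)) l] at h3
    have htl : 0 < t ((l : ℕ) + 1) := (ht ((l : ℕ) + 1) (by omega) l.isLt).1
    exact (mul_eq_zero.1 h3).resolve_right (ne_of_gt htl)
  have hfinV : Module.finrank ℝ ↥V ≤ r := by
    rw [hV]
    exact finrank_span_image_le S hSfin u r hcard
  have hWV : Submodule.span ℝ (Set.range v) = V := by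
    apply Submodule.eq_of_le_of_finrank_le
    · rw [Submodule.span_le]
      rintro _ ⟨l, rfl⟩
      exact hvV l
    · have h1 : Module.finrank ℝ ↥(Submodule.span ℝ (Set.range v)) = r := by
        rw [finrank_span_eq_card hli, Fintype.card_fin]
      rw [h1]
      exact hfinV
  have hf1 : ∀ s ∈ S, ∑ l : Fin r, s l / t ((l : ℕ) + 1) = 1 := by
    intro s hsS
    have hsV : u s ∈ V := hconv s (subset_convexHull ℝ S hsS)
    rw [← hWV] at hsV
    obtain ⟨c, hc⟩ := (Submodule.mem_span_range_iff_exists_fun ℝ).1 hsV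
    have hsnd : ∑ l : Fin r, c l = 1 := by
      have h1 := congrArg Prod.snd hc
      rw [Prod.snd_sum] at h1
      simp only [hv, hu, Prod.smul_mk, smul_eq_mul, mul_one] at h1
      exact h1
    have hfst : ∀ l : Fin r, s l = c l * t ((l : ℕ) + 1) := by
      intro l
      have h1 := congrArg Prod.fst hc
      rw [Prod.fst_sum] at h1
      have h2 := congrFun h1 l
      simp only [hv, hu, Prod.smul_mk, Finset.sum_apply, Pi.smul_apply, smul_eq_mul] at h2
      have h3 : ∑ l' : Fin r, (c l' * t ((l' : ℕ) + 1)) * stdVec r ((l' : ℕ) + 1) l = s l := by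
        rw [← h2]
        exact Finset.sum_congr rfl fun l' _ => by ring
      rw [stdVec_sum_eval r (fun l' => c l' * t ((l' : ℕ) + 1)) l] at h3
      exact h3.symm
    rw [← hsnd]
    refine Finset.sum_congr rfl fun l _ => ?_
    have htl : 0 < t ((l : ℕ) + 1) := (ht ((l : ℕ) + 1) (by omega) l.isLt).1
    rw [hfst l, mul_div_assoc, div_self (ne_of_gt htl), mul_one]
  refine ⟨part1, ?_⟩
  -- PART 2
  set li : Fin r := ⟨i - 1, by omega⟩ with hli
  have hli1 : (li : ℕ) + 1 = i := by simp only [hli]; omega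
  obtain ⟨s, hsS, hspos⟩ : ∃ s ∈ S, 0 < s li := by
    by_contra h
    push_neg at h
    have hsub : convexHull ℝ S ⊆ {x : Fin r → ℝ | x li ≤ 0} :=
      convexHull_min (fun s hs => h s hs)
        (convex_halfSpace_le (⟨fun _ _ => rfl, fun _ _ => rfl⟩ :
          IsLinearMap ℝ fun x : Fin r → ℝ => x li) 0)
    have h1 : (t i • stdVec r i) li ≤ 0 := hsub (ht i hi1 hir).2
    have h2 : (t i • stdVec r i) li = t i := by simp [stdVec, hli1]
    rw [h2] at h1
    linarith
  obtain ⟨i', j, k, hi'1, hi'j, hjr2, hk1, hkm, hseq⟩ := hSB hsS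
  have hii' : i' = i := by
    by_contra hne
    have hle : s li ≤ 0 := by
      rw [hseq]
      simp only [ptB]
      rw [if_neg (show ¬((li : ℕ) + 1 = i') from fun hh => hne (by omega))]
      split_ifs
      · have : (0:ℝ) ≤ (m : ℝ) ^ (2 * R - 2 * ((li : ℕ) + 1) + 3) := by positivity
        linarith
      · exact le_refl 0
    linarith
  rw [hii'] at hi'j hseq
  have hcol : s ∈ colorSetB r R m i := ⟨j, k, hi1, hi'j, hjr2, hk1, hkm, hseq⟩
  have hlay : s ∈ layerSetB r R m r := by
    by_contra hnot
    have h1 := part1 s ⟨hcol, hnot⟩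
    rw [hf1 s hsS] at h1
    exact lt_irrefl 1 h1
  obtain ⟨i'', k'', hi''1, hi''r, _, hk''1, hk''m, hseq2⟩ := hlay
  have hii'' : i'' = i := by
    by_contra hne
    have hle : s li ≤ 0 := by
      rw [hseq2]
      simp only [ptB]
      rw [if_neg (show ¬((li : ℕ) + 1 = i'') from fun hh => hne (by omega))]
      rw [if_neg (show ¬(r + 1 ≤ (li : ℕ) + 1) by omega)]
    linarith
  rw [hii''] at hseq2
  set Pv : ℝ := (∑ l' ∈ Finset.Icc (r + 1) R, (m : ℝ) ^ (2 * R - 2 * l' + 3))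
    + ((R - r : ℕ) : ℝ) * (m : ℝ) + (k'' : ℝ) with hPv
  have hsP : s = Pv • stdVec r i := by
    rw [hseq2]
    funext l
    simp only [ptB, stdVec, Pi.smul_apply, smul_eq_mul]
    by_cases hc : (l : ℕ) + 1 = i
    · rw [if_pos hc, if_pos hc, mul_one, hPv]
    · rw [if_neg hc, if_neg hc, mul_zero, if_neg (show ¬(r + 1 ≤ (l : ℕ) + 1) by
        have := l.isLt; omega)]
  have hfs := hf1 s hsS
  have hterm2 : ∀ l : Fin r, s l / t ((l : ℕ) + 1) = if l = li then Pv / t i else 0 := by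
    intro l
    by_cases hc : l = li
    · subst hc
      rw [hsP]
      simp [stdVec, hli1]
    · have hne : ¬((l : ℕ) + 1 = i) := by
        intro hh
        exact hc (Fin.ext (by omega))
      rw [hsP]
      simp [stdVec, hne, hc]
  rw [Finset.sum_congr rfl (fun l _ => hterm2 l),
    Finset.sum_ite_eq' Finset.univ li (fun _ => Pv / t i)] at hfs
  simp only [Finset.mem_univ, if_true] at hfs
  have hPt : Pv = t i := (div_eq_one_iff_eq (ne_of_gt hti)).1 hfs
  rw [← hPt, ← hsP]
  exact hsS
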